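/- For every η₀ > 0, the toroidal Neumann constants at m = 0 satisfy the three identities: (i) σ_{0,0} q_{0,0} + 2 τ_{0,0} q_{1,0} = 0; (ii) ρ_{1,0} q_{0,0} + 2 ( σ_{1,0} q_{1,0} + τ_{1,0} q_{2,0} ) = 0; (iii) ρ_{n,0} q_{n−1,0} + σ_{n,0} q_{n,0} + τ_{n,0} q_{n+1,0} = 0 for every n ≥ 2. -/

import Mathlib

open Real MeasureTheory intervalIntegral Filter Topology

/-- Associated Legendre function of the second kind of half-integer degree,
`Q_{n-1/2}^m(t)`, defined via its real integral representation (valid for `t > 1`). -/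
noncomputable def Qh (n m : ℕ) (t : ℝ) : ℝ :=
  ((-1 : ℝ) ^ m / (2 : ℝ) ^ ((n : ℝ) + 1 / 2)) *
    (Real.Gamma ((n : ℝ) + (m : ℝ) + 1 / 2) / Real.Gamma ((n : ℝ) + 1 / 2)) *
    (t ^ 2 - 1) ^ ((m : ℝ) / 2) *
    ∫ s in (-1 : ℝ)..1, (1 - s ^ 2) ^ ((n : ℝ) - 1 / 2) * (t - s) ^ (-((n : ℝ) + (m : ℝ) + 1 / 2))

/-- `q_{n,m} = Q_{n-1/2}^m(cosh η₀)`. -/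
noncomputable def qh (η₀ : ℝ) (n m : ℕ) : ℝ := Qh n m (Real.cosh η₀)

/-- `Φ_n^{+1}(θ) = cos (n θ)`, `Φ_n^{-1}(θ) = sin (n θ)`. -/
noncomputable def Phi (ν : ℤ) (n : ℤ) (θ : ℝ) : ℝ :=
  if ν = 1 then Real.cos ((n : ℝ) * θ) else Real.sin ((n : ℝ) * θ)

/-- A quadruple `(n, m, ν, μ)` is admissible. -/
def Admissible (n m : ℕ) (ν μ : ℤ) : Prop :=
  (ν = 1 ∨ ν = -1) ∧ (μ = 1 ∨ μ = -1) ∧ ¬(n = 0 ∧ ν = -1) ∧ ¬(m = 0 ∧ μ = -1)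

/-- Toroidal Neumann constant `ρ_{n,m}(η₀)` (`n ≥ 1`). -/
noncomputable def rhoT (η₀ : ℝ) (n m : ℕ) : ℝ :=
  if n = 1 then
    (1 / (2 * Real.sinh η₀)) *
      (Real.cosh η₀ + (2 * (m : ℝ) - 1) * qh η₀ 1 m / qh η₀ 0 m)
  else
    (1 / (4 * Real.sinh η₀)) *
      ((2 * (n : ℝ) - 1) * Real.cosh η₀ +
        (2 * ((m : ℝ) - (n : ℝ)) + 1) * qh η₀ n m / qh η₀ (n - 1) m)

/-- Toroidal Neumann constant `σ_{n,m}(η₀)`. -/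
noncomputable def sigmaT (η₀ : ℝ) (n m : ℕ) : ℝ :=
  (-1 / (2 * Real.sinh η₀)) *
    ((2 * (n : ℝ) * Real.cosh η₀ ^ 2 + 1) +
      (2 * ((m : ℝ) - (n : ℝ)) - 1) * Real.cosh η₀ * qh η₀ (n + 1) m / qh η₀ n m)

/-- Toroidal Neumann constant `τ_{n,m}(η₀)`. -/
noncomputable def tauT (η₀ : ℝ) (n m : ℕ) : ℝ :=
  (1 / (4 * Real.sinh η₀)) *
    ((2 * (n : ℝ) + 3) * Real.cosh η₀ +
      (2 * ((m : ℝ) - (n : ℝ)) - 3) * qh η₀ (n + 2) m / qh η₀ (n + 1) m)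

/-- The normal derivative `N_{n,m}^{ν,μ}(θ,φ)` of the interior toroidal harmonic
`I_{n,m}^{ν,μ}` on the torus `η = η₀`. -/
noncomputable def NDer (η₀ : ℝ) (n m : ℕ) (ν μ : ℤ) (θ φ : ℝ) : ℝ :=
  (Real.sqrt (Real.cosh η₀ - Real.cos θ) / (4 * Real.sinh η₀)) * Phi μ (m : ℤ) φ *
    (Phi ν ((n : ℤ) - 1) θ *
        ((1 + 2 * (n : ℝ)) * Real.cosh η₀ -
          (2 * ((n : ℝ) - (m : ℝ)) + 1) * qh η₀ (n + 1) m / qh η₀ n m) -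
      2 * Phi ν (n : ℤ) θ *
        ((2 * (n : ℝ) * Real.cosh η₀ ^ 2 + 1) -
          (2 * ((n : ℝ) - (m : ℝ)) + 1) * Real.cosh η₀ * qh η₀ (n + 1) m / qh η₀ n m) +
      Phi ν ((n : ℤ) + 1) θ *
        ((1 + 2 * (n : ℝ)) * Real.cosh η₀ -
          (2 * ((n : ℝ) - (m : ℝ)) + 1) * qh η₀ (n + 1) m / qh η₀ n m))

/-- Interior toroidal harmonic `I_{n,m}^{ν,μ}[η₀]` in toroidal coordinates. -/
noncomputable def Ih (η₀ : ℝ) (n m : ℕ) (ν μ : ℤ) (η θ φ : ℝ) : ℝ :=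
  Real.sqrt (Real.cosh η - Real.cos θ) *
    (Qh n m (Real.cosh η) / Qh n m (Real.cosh η₀)) * Phi ν (n : ℤ) θ * Phi μ (m : ℤ) φ


section KAux
open Set

noncomputable def Kint (t : ℝ) (p : ℕ) (j : ℤ) : ℝ :=
  ∫ ψ in (0:ℝ)..π, Real.sin ψ ^ (2*p) * (t - Real.cos ψ) ^ ((j:ℝ) - 1/2)

lemma tsub_pos {t : ℝ} (ht : 1 < t) (x : ℝ) : 0 < t - Real.cos x := by
  have := Real.cos_le_one x; linarith

lemma contK {t : ℝ} (ht : 1 < t) (p : ℕ) (r : ℝ) :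
    Continuous fun ψ => Real.sin ψ ^ p * (t - Real.cos ψ) ^ r :=
  (Real.continuous_sin.pow p).mul
    ((continuous_const.sub Real.continuous_cos).rpow_const
      fun x => Or.inl (ne_of_gt (tsub_pos ht x)))

lemma Kint_pos {t : ℝ} (ht : 1 < t) (p : ℕ) (j : ℤ) : 0 < Kint t p j := by
  apply intervalIntegral.intervalIntegral_pos_of_pos_on
    ((contK ht (2*p) _).intervalIntegrable _ _)
  · intro x hx
    have h1 : 0 < Real.sin x := Real.sin_pos_of_pos_of_lt_pi hx.1 hx.2
    have h2 : 0 < t - Real.cos x := tsub_pos ht x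
    exact mul_pos (pow_pos h1 _) (Real.rpow_pos_of_pos h2 _)
  · exact Real.pi_pos

lemma Kint_ibp {t : ℝ} (ht : 1 < t) (p : ℕ) (j : ℤ) :
    (2*(p:ℝ)+1) * (t * Kint t p j - Kint t p (j+1))
      + ((j:ℝ) - 1/2) * Kint t (p+1) (j-1) = 0 := by
  set r : ℝ := (j:ℝ) - 1/2 with hr
  have hderiv : ∀ ψ ∈ Set.uIcc (0:ℝ) π, HasDerivAt
      (fun ψ => Real.sin ψ ^ (2*p+1) * (t - Real.cos ψ) ^ r)
      ((2*(p:ℝ)+1) * (Real.cos ψ * (Real.sin ψ ^ (2*p) * (t - Real.cos ψ) ^ r))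
        + r * (Real.sin ψ ^ (2*(p+1)) * (t - Real.cos ψ) ^ (r-1))) ψ := by
    intro ψ _
    have h1 : HasDerivAt (fun ψ => Real.sin ψ ^ (2*p+1))
        (((2*p+1 : ℕ) : ℝ) * Real.sin ψ ^ (2*p) * Real.cos ψ) ψ := by
      simpa using (Real.hasDerivAt_sin ψ).fun_pow (2*p+1)
    have hb : HasDerivAt (fun ψ => t - Real.cos ψ) (Real.sin ψ) ψ := by
      simpa using (Real.hasDerivAt_cos ψ).const_sub t
    have h2 := hb.rpow_const (p := r) (Or.inl (ne_of_gt (tsub_pos ht ψ)))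
    have h := h1.fun_mul h2
    refine h.congr_deriv ?_
    push_cast
    ring
  have hc1 : Continuous fun ψ =>
      (2*(p:ℝ)+1) * (Real.cos ψ * (Real.sin ψ ^ (2*p) * (t - Real.cos ψ) ^ r)) :=
    continuous_const.mul (Real.continuous_cos.mul (contK ht (2*p) r))
  have hc2 : Continuous fun ψ =>
      r * (Real.sin ψ ^ (2*(p+1)) * (t - Real.cos ψ) ^ (r-1)) :=
    continuous_const.mul (contK ht (2*(p+1)) (r-1))
  have key := intervalIntegral.integral_eq_sub_of_hasDerivAt hderiv
    ((hc1.add hc2).intervalIntegrable _ _)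
  rw [Real.sin_pi, Real.sin_zero, zero_pow (by omega), zero_mul, zero_mul, sub_zero] at key
  rw [intervalIntegral.integral_add (hc1.intervalIntegrable 0 π) (hc2.intervalIntegrable 0 π),
    intervalIntegral.integral_const_mul, intervalIntegral.integral_const_mul] at key
  have e1 : ∫ ψ in (0:ℝ)..π, Real.cos ψ * (Real.sin ψ ^ (2*p) * (t - Real.cos ψ) ^ r)
      = t * Kint t p j - Kint t p (j+1) := by
    have hpt : ∀ ψ : ℝ, Real.cos ψ * (Real.sin ψ ^ (2*p) * (t - Real.cos ψ) ^ r)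
        = t * (Real.sin ψ ^ (2*p) * (t - Real.cos ψ) ^ r)
          - Real.sin ψ ^ (2*p) * (t - Real.cos ψ) ^ (r+1) := by
      intro ψ
      rw [Real.rpow_add_one (ne_of_gt (tsub_pos ht ψ))]
      ring
    simp only [hpt]
    rw [intervalIntegral.integral_sub
        ((continuous_const.fun_mul (contK ht (2*p) r)).intervalIntegrable 0 π)
        ((contK ht (2*p) (r+1)).intervalIntegrable 0 π),
      intervalIntegral.integral_const_mul]
    have ej : ((j+1 : ℤ) : ℝ) - 1/2 = r + 1 := by push_cast [hr]; ring
    simp only [Kint, ej, ← hr]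
  have e2 : Kint t (p+1) (j-1)
      = ∫ ψ in (0:ℝ)..π, Real.sin ψ ^ (2*(p+1)) * (t - Real.cos ψ) ^ (r-1) := by
    have ej : ((j-1 : ℤ) : ℝ) - 1/2 = r - 1 := by push_cast [hr]; ring
    simp only [Kint, ej]
  rw [e1] at key
  rw [e2]
  linarith [key]

lemma Kint_alg {t : ℝ} (ht : 1 < t) (p : ℕ) (j : ℤ) :
    Kint t (p+1) j = -Kint t p (j+2) + 2*t*Kint t p (j+1) - (t^2-1)*Kint t p j := by
  set r : ℝ := (j:ℝ) - 1/2 with hr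
  have hpt : ∀ ψ : ℝ, Real.sin ψ ^ (2*(p+1)) * (t - Real.cos ψ) ^ r
      = (-(Real.sin ψ ^ (2*p) * (t - Real.cos ψ) ^ (r+1+1))
          + 2*t*(Real.sin ψ ^ (2*p) * (t - Real.cos ψ) ^ (r+1)))
        - (t^2-1)*(Real.sin ψ ^ (2*p) * (t - Real.cos ψ) ^ r) := by
    intro ψ
    have hne := ne_of_gt (tsub_pos ht ψ)
    rw [Real.rpow_add_one hne, Real.rpow_add_one hne]
    have hs : Real.sin ψ ^ (2*(p+1)) = Real.sin ψ ^ (2*p) * (1 - Real.cos ψ ^ 2) := by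
      rw [← Real.sin_sq]; ring
    rw [hs]; ring
  have i1 := (contK ht (2*p) (r+1+1)).intervalIntegrable (μ := volume) 0 π
  have i2 := (continuous_const.fun_mul (contK ht (2*p) (r+1)) :
      Continuous fun ψ => 2*t*(Real.sin ψ ^ (2*p) * (t - Real.cos ψ) ^ (r+1))).intervalIntegrable (μ := volume) 0 π
  have i3 := (continuous_const.fun_mul (contK ht (2*p) r) :
      Continuous fun ψ => (t^2-1)*(Real.sin ψ ^ (2*p) * (t - Real.cos ψ) ^ r)).intervalIntegrable (μ := volume) 0 π
  have e0 : Kint t (p+1) j = ∫ ψ in (0:ℝ)..π,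
      ((-(Real.sin ψ ^ (2*p) * (t - Real.cos ψ) ^ (r+1+1))
          + 2*t*(Real.sin ψ ^ (2*p) * (t - Real.cos ψ) ^ (r+1)))
        - (t^2-1)*(Real.sin ψ ^ (2*p) * (t - Real.cos ψ) ^ r)) := by
    simp only [Kint, ← hr, hpt]
  have i1n : IntervalIntegrable (fun ψ => -(Real.sin ψ ^ (2*p) * (t - Real.cos ψ) ^ (r+1+1))) volume 0 π := i1.neg
  rw [e0, intervalIntegral.integral_sub (i1n.add i2) i3,
    intervalIntegral.integral_add i1n i2, intervalIntegral.integral_neg,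
    intervalIntegral.integral_const_mul, intervalIntegral.integral_const_mul]
  have ej1 : ((j+1 : ℤ) : ℝ) - 1/2 = r + 1 := by push_cast [hr]; ring
  have ej2 : ((j+2 : ℤ) : ℝ) - 1/2 = r + 1 + 1 := by push_cast [hr]; ring
  simp only [Kint, ej1, ej2, ← hr]

lemma Kint_rec {t : ℝ} (ht : 1 < t) (p : ℕ) :
    (2*(p:ℝ)+3) * Kint t (p+2) (-(p:ℤ)-2) - 8*((p:ℝ)+1)*t*Kint t (p+1) (-(p:ℤ)-1)
      + 4*(2*(p:ℝ)+1)*Kint t p (-(p:ℤ)) = 0 := by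
  have R1 := Kint_ibp ht (p+1) (-(p:ℤ)-1)
  have R2 := Kint_ibp ht p (-(p:ℤ))
  have R3 := Kint_ibp ht p (-(p:ℤ)+1)
  have R4 := Kint_alg ht p (-(p:ℤ))
  simp only [show (-(p:ℤ)-1)+1 = -(p:ℤ) from by ring,
    show (-(p:ℤ)-1)-1 = -(p:ℤ)-2 from by ring,
    show (-(p:ℤ)+1)+1 = -(p:ℤ)+2 from by ring,
    show (-(p:ℤ)+1)-1 = -(p:ℤ) from by ring,
    show (-(p:ℤ))+2 = -(p:ℤ)+2 from rfl,
    show (-(p:ℤ))+1 = -(p:ℤ)+1 from rfl,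
    show (p:ℕ)+1+1 = p+2 from rfl] at R1 R2 R3 R4
  push_cast at R1 R2 R3 R4
  linear_combination (-2)*R1 + 4*t*R2 + (-4)*R3 + (-4*(2*(p:ℝ)+1))*R4



lemma I_eq_K {t : ℝ} (ht : 1 < t) (n : ℕ) :
    (∫ s in (-1:ℝ)..1, (1 - s^2) ^ ((n:ℝ) - 1/2) * (t - s) ^ (-((n:ℝ) + 1/2)))
      = Kint t n (-(n:ℤ)) := by
  set g : ℝ → ℝ := fun s => (1 - s^2) ^ ((n:ℝ) - 1/2) * (t - s) ^ (-((n:ℝ) + 1/2)) with hg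
  have himg : Real.cos '' Set.Icc 0 π = Set.Icc (-1:ℝ) 1 := Real.bijOn_cos.image_eq
  have hderiv : ∀ x ∈ Set.Icc (0:ℝ) π, HasDerivWithinAt Real.cos (-Real.sin x) (Set.Icc 0 π) x :=
    fun x _ => (Real.hasDerivAt_cos x).hasDerivWithinAt
  have key := MeasureTheory.integral_image_eq_integral_abs_deriv_smul measurableSet_Icc hderiv
    Real.injOn_cos g
  rw [himg] at key
  have lhs1 : (∫ s in (-1:ℝ)..1, g s) = ∫ s in Set.Icc (-1:ℝ) 1, g s := by
    rw [intervalIntegral.integral_of_le (by norm_num), MeasureTheory.integral_Icc_eq_integral_Ioc]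
  have rhs1 : Kint t n (-(n:ℤ)) = ∫ x in Set.Icc (0:ℝ) π,
      Real.sin x ^ (2*n) * (t - Real.cos x) ^ (((-(n:ℤ)):ℝ) - 1/2) := by
    rw [Kint, intervalIntegral.integral_of_le Real.pi_pos.le,
      MeasureTheory.integral_Icc_eq_integral_Ioc]
    norm_cast
  rw [lhs1, key, rhs1, MeasureTheory.integral_Icc_eq_integral_Ioo,
    MeasureTheory.integral_Icc_eq_integral_Ioo]
  apply MeasureTheory.setIntegral_congr_fun measurableSet_Ioo
  intro x hx
  dsimp only
  have hs : 0 < Real.sin x := Real.sin_pos_of_pos_of_lt_pi hx.1 hx.2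
  have hcos : (1:ℝ) - Real.cos x ^ 2 = Real.sin x ^ 2 := by
    rw [Real.sin_sq]
  rw [smul_eq_mul, hg]
  simp only [abs_neg, abs_of_pos hs]
  rw [hcos]
  have h2 : (Real.sin x ^ 2 : ℝ) ^ ((n:ℝ)-1/2) = Real.sin x ^ (2*((n:ℝ)-1/2)) := by
    rw [← Real.rpow_natCast (Real.sin x) 2, ← Real.rpow_mul hs.le]
    norm_num
  rw [h2]
  have h3 : Real.sin x * Real.sin x ^ (2*((n:ℝ)-1/2)) = Real.sin x ^ ((2*n : ℕ) : ℝ) := by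
    nth_rewrite 1 [← Real.rpow_one (Real.sin x)]
    rw [← Real.rpow_add hs]
    push_cast
    ring_nf
  have h4 : (((-(n:ℤ)):ℝ) - 1/2) = -((n:ℝ) + 1/2) := by push_cast; ring
  rw [h4, ← mul_assoc, h3, Real.rpow_natCast]

end KAux

section Aux

open Set

lemma qh_eq {η₀ : ℝ} (hη₀ : 0 < η₀) (n : ℕ) :
    qh η₀ n 0 = (2:ℝ) ^ (-((n:ℝ) + 1/2)) * Kint (Real.cosh η₀) n (-(n:ℤ)) := by
  have ht : 1 < Real.cosh η₀ := Real.one_lt_cosh.2 (ne_of_gt hη₀)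
  have hΓ : Real.Gamma ((n:ℝ) + 1/2) ≠ 0 := (Real.Gamma_pos_of_pos (by positivity)).ne'
  rw [qh, Qh]
  simp only [Nat.cast_zero, add_zero, pow_zero, zero_div, Real.rpow_zero, div_self hΓ,
    mul_one, one_mul]
  rw [I_eq_K ht n, Real.rpow_neg (by norm_num : (0:ℝ) ≤ 2)]
  ring

lemma qh_pos {η₀ : ℝ} (hη₀ : 0 < η₀) (n : ℕ) : 0 < qh η₀ n 0 := by
  have ht : 1 < Real.cosh η₀ := Real.one_lt_cosh.2 (ne_of_gt hη₀)
  rw [qh_eq hη₀ n]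
  exact mul_pos (Real.rpow_pos_of_pos two_pos _) (Kint_pos ht n _)

lemma qh_rec {η₀ : ℝ} (hη₀ : 0 < η₀) (p : ℕ) :
    (2*(p:ℝ)+3) * qh η₀ (p+2) 0 - 4*((p:ℝ)+1)*Real.cosh η₀ * qh η₀ (p+1) 0
      + (2*(p:ℝ)+1) * qh η₀ p 0 = 0 := by
  have ht : 1 < Real.cosh η₀ := Real.one_lt_cosh.2 (ne_of_gt hη₀)
  have hK := Kint_rec ht p
  rw [qh_eq hη₀ (p+2), qh_eq hη₀ (p+1), qh_eq hη₀ p]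
  have e1 : (2:ℝ) ^ (-(((p+1:ℕ):ℝ) + 1/2)) = (2:ℝ) ^ (-(((p:ℕ):ℝ) + 1/2)) / 2 := by
    rw [eq_div_iff (by norm_num : (2:ℝ) ≠ 0), ← Real.rpow_add_one (by norm_num : (2:ℝ) ≠ 0)]
    congr 1; push_cast; ring
  have e2 : (2:ℝ) ^ (-(((p+2:ℕ):ℝ) + 1/2)) = (2:ℝ) ^ (-(((p:ℕ):ℝ) + 1/2)) / 4 := by
    rw [eq_div_iff (by norm_num : (4:ℝ) ≠ 0), show (4:ℝ) = 2*2 by norm_num, ← mul_assoc,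
      ← Real.rpow_add_one (by norm_num : (2:ℝ) ≠ 0),
      ← Real.rpow_add_one (by norm_num : (2:ℝ) ≠ 0)]
    congr 1; push_cast; ring
  have e3 : (-(((p:ℕ)+2:ℕ):ℤ)) = -(p:ℤ)-2 := by push_cast; ring
  have e4 : (-(((p:ℕ)+1:ℕ):ℤ)) = -(p:ℤ)-1 := by push_cast; ring
  rw [e1, e2, e3, e4]
  push_cast
  linear_combination ((2:ℝ) ^ (-(((p:ℕ):ℝ) + 1/2)) / 4) * hK

end Aux

/-- special relations among the toroidal Neumann constants at `m = 0`. -/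
theorem neumann_constants_relations (η₀ : ℝ) (hη₀ : 0 < η₀) :
    sigmaT η₀ 0 0 * qh η₀ 0 0 + 2 * tauT η₀ 0 0 * qh η₀ 1 0 = 0 ∧
    rhoT η₀ 1 0 * qh η₀ 0 0 +
      2 * (sigmaT η₀ 1 0 * qh η₀ 1 0 + tauT η₀ 1 0 * qh η₀ 2 0) = 0 ∧
    ∀ n : ℕ, 2 ≤ n →
      rhoT η₀ n 0 * qh η₀ (n - 1) 0 + sigmaT η₀ n 0 * qh η₀ n 0 +
        tauT η₀ n 0 * qh η₀ (n + 1) 0 = 0 := by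
  have hsh : Real.sinh η₀ ≠ 0 := (Real.sinh_pos_iff.2 hη₀).ne'
  have q0 := (qh_pos hη₀ 0).ne'
  have q1 := (qh_pos hη₀ 1).ne'
  have q2 := (qh_pos hη₀ 2).ne'
  have q3 := (qh_pos hη₀ 3).ne'
  have r0 := qh_rec hη₀ 0
  have r1 := qh_rec hη₀ 1
  norm_num at r0 r1
  refine ⟨?_, ?_, ?_⟩
  · simp only [sigmaT, tauT]
    norm_num
    field_simp
    linear_combination (-4) * r0
  · simp only [rhoT, sigmaT, tauT, if_pos rfl]
    norm_num
    field_simp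
    linear_combination (4*Real.cosh η₀)*r0
      - 4*r1
  · intro n hn
    obtain ⟨k, rfl⟩ := Nat.exists_eq_add_of_le hn
    have qk1 := (qh_pos hη₀ (k+1)).ne'
    have qk2 := (qh_pos hη₀ (k+2)).ne'
    have qk3 := (qh_pos hη₀ (k+3)).ne'
    have ra := qh_rec hη₀ (k+1)
    have rb := qh_rec hη₀ (k+2)
    rw [rhoT, if_neg (by omega : ¬(2 + k = 1)), sigmaT, tauT]
    simp only [show (2+k : ℕ) = k+2 from by omega, show (2+k-1 : ℕ) = k+1 from by omega,
      show (k+2+1 : ℕ) = k+3 from by omega, show (k+2+2 : ℕ) = k+4 from by omega,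
      show (k+1+2 : ℕ) = k+3 from by omega, show (k+1+1 : ℕ) = k+2 from by omega] at *
    push_cast at *
    field_simp
    linear_combination
      (2*Real.cosh η₀)*ra
      - 2*rb
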